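/- Assume ñ > 2. Let 0 < τ < ρ ≤ ∞ and let u : [τ, ρ) → ℝ be twice continuously differentiable with u(r) > 0 and u'(r) ≤ 0 for all r ∈ [τ, ρ), satisfying the Pucci differential inequalities at every r ∈ [τ, ρ). Then the energy function E₁(r) = r^{2(ñ−1)}·(u'(r)²/2 + u(r)^{p+1}/(Λ(p+1))) is strictly increasing on [τ, ρ), and the energy function E₂(r) = u'(r)²/2 + u(r)^{p+1}/(λ(p+1)) is nonincreasing on [τ, ρ). -/

import Mathlib

open Real Set

/-- `P⁺[u](r)`: the Pucci maximal operator `𝓜⁺_{λ,Λ}` evaluated on the Hessian of the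
radial function `v(x) = u(|x|)`, expressed through `u'` and `u''`. -/
noncomputable def Pp (n : ℕ) (lam Lam : ℝ) (u' u'' : ℝ → ℝ) (r : ℝ) : ℝ :=
  Lam * max (u'' r) 0 + lam * min (u'' r) 0 +
    ((n : ℝ) - 1) * (Lam * max (u' r / r) 0 + lam * min (u' r / r) 0)

/-- `P⁻[u](r)`: the Pucci minimal operator `𝓜⁻_{λ,Λ}` evaluated on the Hessian of the
radial function `v(x) = u(|x|)`. -/
noncomputable def Pm (n : ℕ) (lam Lam : ℝ) (u' u'' : ℝ → ℝ) (r : ℝ) : ℝ :=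
  lam * max (u'' r) 0 + Lam * min (u'' r) 0 +
    ((n : ℝ) - 1) * (lam * max (u' r / r) 0 + Lam * min (u' r / r) 0)

/-- `u` satisfies the Pucci differential inequalities at `r`:
`−P⁺[u](r) ≤ |u(r)|^{p−1}u(r) ≤ −P⁻[u](r)`. -/
def PucciIneq (n : ℕ) (lam Lam p : ℝ) (u u' u'' : ℝ → ℝ) (r : ℝ) : Prop :=
  -Pp n lam Lam u' u'' r ≤ |u r| ^ (p - 1) * u r ∧
    |u r| ^ (p - 1) * u r ≤ -Pm n lam Lam u' u'' r

set_option maxHeartbeats 1000000 in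
/-- Proposition 2.2 (paper): along a positive nonincreasing radial arc satisfying the Pucci
differential inequalities on `[τ, ρ)` (with `ρ ≤ ∞`) and `ñ₋ > 2`, the energy
`E₁(r) = r^{2(ñ₋−1)}(u'(r)²/2 + u(r)^{p+1}/(Λ(p+1)))` is strictly increasing and
`E₂(r) = u'(r)²/2 + u(r)^{p+1}/(λ(p+1))` is nonincreasing. -/
theorem energy_monotonicity
    (n : ℕ) (hn : 2 ≤ n) (lam Lam p ntil : ℝ) (hlam : 0 < lam) (hlL : lam ≤ Lam) (hp : 1 < p)
    (hnt : ntil = Lam / lam * ((n : ℝ) - 1) + 1) (hnt2 : 2 < ntil)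
    (τ : ℝ) (hτ : 0 < τ) (ρ : WithTop ℝ) (hτρ : (τ : WithTop ℝ) < ρ)
    (u u' u'' : ℝ → ℝ)
    (hu : ∀ r : ℝ, τ ≤ r → (r : WithTop ℝ) < ρ → HasDerivAt u (u' r) r)
    (hu' : ∀ r : ℝ, τ ≤ r → (r : WithTop ℝ) < ρ → HasDerivAt u' (u'' r) r)
    (hu'' : ContinuousOn u'' {r : ℝ | τ ≤ r ∧ (r : WithTop ℝ) < ρ})
    (hpos : ∀ r : ℝ, τ ≤ r → (r : WithTop ℝ) < ρ → 0 < u r)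
    (hdec : ∀ r : ℝ, τ ≤ r → (r : WithTop ℝ) < ρ → u' r ≤ 0)
    (hPucci : ∀ r : ℝ, τ ≤ r → (r : WithTop ℝ) < ρ → PucciIneq n lam Lam p u u' u'' r) :
    StrictMonoOn
      (fun r : ℝ => r ^ (2 * (ntil - 1)) * (u' r ^ 2 / 2 + u r ^ (p + 1) / (Lam * (p + 1))))
      {r : ℝ | τ ≤ r ∧ (r : WithTop ℝ) < ρ} ∧
    AntitoneOn (fun r : ℝ => u' r ^ 2 / 2 + u r ^ (p + 1) / (lam * (p + 1)))
      {r : ℝ | τ ≤ r ∧ (r : WithTop ℝ) < ρ} := by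
  have hLam : 0 < Lam := lt_of_lt_of_le hlam hlL
  have hp1 : (0:ℝ) < p + 1 := by linarith
  have hn2 : (2:ℝ) ≤ (n:ℝ) := by exact_mod_cast hn
  have hnt' : ntil - 1 = Lam / lam * ((n:ℝ) - 1) := by rw [hnt]; ring
  set S : Set ℝ := {r : ℝ | τ ≤ r ∧ (r : WithTop ℝ) < ρ} with hSdef
  have hconv : Convex ℝ S := by
    rw [convex_iff_ordConnected]
    exact ⟨fun x hx y hy z hz => ⟨hx.1.trans hz.1,
      lt_of_le_of_lt (WithTop.coe_le_coe.2 hz.2) hy.2⟩⟩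
  -- key pointwise inequalities from the Pucci inequalities
  have step : ∀ r : ℝ, τ ≤ r → (r : WithTop ℝ) < ρ →
      (-(ntil - 1) * u' r ^ 2 / r ≤ u' r * u'' r + u r ^ p * u' r / Lam) ∧
      (0 ≤ u'' r + u r ^ p / lam) := by
    intro r h1 h2
    have hrpos : 0 < r := lt_of_lt_of_le hτ h1
    have hU : 0 < u r := hpos r h1 h2
    have hP : 0 < u r ^ p := Real.rpow_pos_of_pos hU p
    have hb : u' r ≤ 0 := hdec r h1 h2
    have hbr : u' r / r ≤ 0 := div_nonpos_of_nonpos_of_nonneg hb hrpos.le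
    obtain ⟨hP1, hP2⟩ := hPucci r h1 h2
    have habs : |u r| ^ (p - 1) * u r = u r ^ p := by
      rw [abs_of_pos hU, ← Real.rpow_add_one hU.ne' (p - 1)]
      norm_num
    rw [habs] at hP1 hP2
    rw [Pp, max_eq_right hbr, min_eq_left hbr] at hP1
    rw [Pm, max_eq_right hbr, min_eq_left hbr] at hP2
    have hn1 : (0:ℝ) ≤ (n:ℝ) - 1 := by linarith
    rcases le_or_gt 0 (u'' r) with ha | ha
    · rw [max_eq_left ha, min_eq_right ha] at hP1 hP2
      constructor
      · -- from hP2
        have hlin : lam * u'' r + ((n:ℝ) - 1) * (lam * 0 + Lam * (u' r / r)) ≤ -(u r ^ p) := by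
          linarith
        have hmul := mul_le_mul_of_nonneg_right hlin hrpos.le
        have e : (lam * u'' r + ((n:ℝ) - 1) * (lam * 0 + Lam * (u' r / r))) * r
            = lam * u'' r * r + ((n:ℝ) - 1) * Lam * u' r := by
          field_simp
          ring
        rw [e] at hmul
        have hk' : 0 ≤ lam * Lam * r * (u' r * u'' r) + lam * r * (u r ^ p * u' r)
            + Lam * Lam * ((n:ℝ) - 1) * u' r ^ 2 := by
          nlinarith [mul_nonneg hLam.le (mul_nonneg (neg_nonneg.2 hb)
              (show (0:ℝ) ≤ -(u r ^ p) * r - lam * u'' r * r - ((n:ℝ) - 1) * Lam * u' r by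
                linarith)),
            mul_nonneg (mul_nonneg (mul_nonneg (sub_nonneg.2 hlL) hrpos.le) hP.le)
              (neg_nonneg.2 hb)]
        have hkEq : u' r * u'' r + u r ^ p * u' r / Lam + (ntil - 1) * u' r ^ 2 / r
            = (lam * Lam * r * (u' r * u'' r) + lam * r * (u r ^ p * u' r)
                + Lam * Lam * ((n:ℝ) - 1) * u' r ^ 2) / (lam * Lam * r) := by
          rw [hnt']
          field_simp
        have h0 : 0 ≤ u' r * u'' r + u r ^ p * u' r / Lam + (ntil - 1) * u' r ^ 2 / r := by
          rw [hkEq]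
          exact div_nonneg hk' (by positivity)
        have hng : -(ntil - 1) * u' r ^ 2 / r = -((ntil - 1) * u' r ^ 2 / r) := by ring
        linarith [hng.ge, hng.le]
      · exact add_nonneg ha (le_of_lt (div_pos hP hlam))
    · rw [max_eq_right ha.le, min_eq_left ha.le] at hP1 hP2
      constructor
      · -- from hP2
        have hlin : Lam * u'' r + ((n:ℝ) - 1) * (lam * 0 + Lam * (u' r / r)) ≤ -(u r ^ p) := by
          linarith
        have hmul := mul_le_mul_of_nonneg_right hlin hrpos.le
        have e : (Lam * u'' r + ((n:ℝ) - 1) * (lam * 0 + Lam * (u' r / r))) * r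
            = Lam * u'' r * r + ((n:ℝ) - 1) * Lam * u' r := by
          field_simp
          ring
        rw [e] at hmul
        have hk' : 0 ≤ lam * Lam * r * (u' r * u'' r) + lam * r * (u r ^ p * u' r)
            + Lam * Lam * ((n:ℝ) - 1) * u' r ^ 2 := by
          nlinarith [mul_nonneg hlam.le (mul_nonneg (neg_nonneg.2 hb)
              (show (0:ℝ) ≤ -(u r ^ p) * r - Lam * u'' r * r - ((n:ℝ) - 1) * Lam * u' r by
                linarith)),
            mul_nonneg (mul_nonneg (mul_nonneg (sub_nonneg.2 hlL) hLam.le) hn1)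
              (sq_nonneg (u' r))]
        have hkEq : u' r * u'' r + u r ^ p * u' r / Lam + (ntil - 1) * u' r ^ 2 / r
            = (lam * Lam * r * (u' r * u'' r) + lam * r * (u r ^ p * u' r)
                + Lam * Lam * ((n:ℝ) - 1) * u' r ^ 2) / (lam * Lam * r) := by
          rw [hnt']
          field_simp
        have h0 : 0 ≤ u' r * u'' r + u r ^ p * u' r / Lam + (ntil - 1) * u' r ^ 2 / r := by
          rw [hkEq]
          exact div_nonneg hk' (by positivity)
        have hng : -(ntil - 1) * u' r ^ 2 / r = -((ntil - 1) * u' r ^ 2 / r) := by ring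
        linarith [hng.ge, hng.le]
      · -- from hP1 : -(Lam*0 + lam * u'' r + ((n:ℝ)-1)*(Lam*0+lam*(u' r/r))) ≤ u r ^ p
        have hlaP : 0 ≤ lam * u'' r + u r ^ p := by
          linarith [mul_nonneg (mul_nonneg hn1 hlam.le) (neg_nonneg.2 hbr)]
        have e2 : u'' r + u r ^ p / lam = (lam * u'' r + u r ^ p) / lam := by
          field_simp
        rw [e2]
        exact div_nonneg hlaP hlam.le
  -- derivative of E₂
  have hderiv2 : ∀ r ∈ S, HasDerivAt
      (fun x : ℝ => u' x ^ 2 / 2 + u x ^ (p + 1) / (lam * (p + 1)))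
      (u' r * (u'' r + u r ^ p / lam)) r := by
    intro r hr
    have hU : 0 < u r := hpos r hr.1 hr.2
    have h1 := ((hu' r hr.1 hr.2).pow 2).div_const 2
    have h2 := ((hu r hr.1 hr.2).rpow_const (p := p + 1) (Or.inl hU.ne')).div_const (lam * (p + 1))
    have h3 := h1.add h2
    refine h3.congr_deriv ?_
    rw [show p + 1 - 1 = p from by ring]
    field_simp
    ring
  -- derivative of E₁
  have hderiv1 : ∀ r ∈ S, HasDerivAt
      (fun x : ℝ => x ^ (2 * (ntil - 1)) * (u' x ^ 2 / 2 + u x ^ (p + 1) / (Lam * (p + 1))))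
      (r ^ (2 * (ntil - 1) - 1) *
        (2 * (ntil - 1) * (u' r ^ 2 / 2 + u r ^ (p + 1) / (Lam * (p + 1)))
          + r * (u' r * u'' r + u r ^ p * u' r / Lam))) r := by
    intro r hr
    have hrpos : 0 < r := lt_of_lt_of_le hτ hr.1
    have hU : 0 < u r := hpos r hr.1 hr.2
    have h0 : HasDerivAt (fun x : ℝ => x ^ (2 * (ntil - 1)))
        (2 * (ntil - 1) * r ^ (2 * (ntil - 1) - 1)) r :=
      Real.hasDerivAt_rpow_const (Or.inl hrpos.ne')
    have h1 := ((hu' r hr.1 hr.2).pow 2).div_const 2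
    have h2 := ((hu r hr.1 hr.2).rpow_const (p := p + 1) (Or.inl hU.ne')).div_const (Lam * (p + 1))
    have h3 := h0.mul (h1.add h2)
    refine h3.congr_deriv ?_
    rw [show p + 1 - 1 = p from by ring]
    have hrc : r ^ (2 * (ntil - 1)) = r ^ (2 * (ntil - 1) - 1) * r := by
      rw [← Real.rpow_add_one hrpos.ne']
      congr 1
      ring
    rw [hrc]
    simp only [Pi.add_apply, Pi.pow_apply]
    field_simp
    ring
  -- positivity of the E₁ derivative
  have hpos1 : ∀ r ∈ S, 0 < r ^ (2 * (ntil - 1) - 1) *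
      (2 * (ntil - 1) * (u' r ^ 2 / 2 + u r ^ (p + 1) / (Lam * (p + 1)))
        + r * (u' r * u'' r + u r ^ p * u' r / Lam)) := by
    intro r hr
    have hrpos : 0 < r := lt_of_lt_of_le hτ hr.1
    have hU : 0 < u r := hpos r hr.1 hr.2
    obtain ⟨hk, -⟩ := step r hr.1 hr.2
    have hA : 0 < r ^ (2 * (ntil - 1) - 1) := Real.rpow_pos_of_pos hrpos _
    have hW : 0 < u r ^ (p + 1) / (Lam * (p + 1)) :=
      div_pos (Real.rpow_pos_of_pos hU _) (by positivity)
    have h5 := mul_le_mul_of_nonneg_left hk hrpos.le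
    have h6 : r * (-(ntil - 1) * u' r ^ 2 / r) = -(ntil - 1) * u' r ^ 2 := by
      field_simp
    have hinner : 0 < 2 * (ntil - 1) * (u' r ^ 2 / 2 + u r ^ (p + 1) / (Lam * (p + 1)))
        + r * (u' r * u'' r + u r ^ p * u' r / Lam) := by
      nlinarith [h5, h6, mul_pos (show (0:ℝ) < ntil - 1 by linarith) hW]
    exact mul_pos hA hinner
  constructor
  · exact strictMonoOn_of_deriv_pos hconv
      (fun r hr => (hderiv1 r hr).continuousAt.continuousWithinAt)
      (fun x hx => by
        have hxS : x ∈ S := interior_subset hx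
        rw [(hderiv1 x hxS).deriv]
        exact hpos1 x hxS)
  · refine antitoneOn_of_deriv_nonpos hconv
      (fun r hr => (hderiv2 r hr).continuousAt.continuousWithinAt)
      (fun x hx => ((hderiv2 x (interior_subset hx)).differentiableAt).differentiableWithinAt)
      (fun x hx => ?_)
    have hxS : x ∈ S := interior_subset hx
    rw [(hderiv2 x hxS).deriv]
    have hb : u' x ≤ 0 := hdec x hxS.1 hxS.2
    obtain ⟨-, hk2⟩ := step x hxS.1 hxS.2
    exact mul_nonpos_of_nonpos_of_nonneg hb hk2
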